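/- arXiv:0808.3646 — 3 statements merged into one kernel-verified Lean document; each statement's English description precedes it below -/
import Mathlib

section
/- For every signed word u with k letters, the subword-counting function N_u, which assigns to a signed word w the number of k-element subsets of the letters of w whose induced signed subword is cyclically equivalent to an isomorphic copy of u, is a cyclic equivalence invariant and a finite type invariant of degree ≤ k. -/
/-- Letters are indexed by natural numbers; a signed letter carries a sign
(`true` = `+`, `false` = `−`). -/
abbrev Letter : Type := ℕ × Bool

/-- A signed word: every entry occurs exactly twice, and the two occurrences of
any letter carry the same sign. -/
def IsSignedWord (w : List Letter) : Prop :=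
  ∀ p ∈ w, w.count p = 2 ∧ ∀ q ∈ w, q.1 = p.1 → q.2 = p.2

/-- Signed words (concrete representatives; isomorphism is subsumed by cyclic
equivalence below). -/
def SignedWord : Type := {w : List Letter // IsSignedWord w}

/-- The set of letters occurring in a list of signed letters. -/
def lettersL (w : List Letter) : Finset ℕ := (w.map Prod.fst).toFinset

/-- The set of letters of a signed word. -/
def SignedWord.letters (w : SignedWord) : Finset ℕ := lettersL w.1

/-- The number of (distinct) letters of a signed word. -/
def SignedWord.numLetters (w : SignedWord) : ℕ := w.letters.card

theorem isSignedWord_filter (q : ℕ → Bool) {w : List Letter} (hw : IsSignedWord w) :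
    IsSignedWord (w.filter fun p => q p.1) := by
  intro p hp
  rw [List.mem_filter] at hp
  refine ⟨?_, fun r hr => (hw p hp.1).2 r (List.mem_filter.mp hr).1⟩
  rw [List.count_filter (p := fun r : Letter => q r.1) hp.2]
  exact (hw p hp.1).1

/-- Delete both occurrences of every letter of `T` from `w`. -/
def SignedWord.delete (w : SignedWord) (T : Finset ℕ) : SignedWord :=
  ⟨w.1.filter fun p => decide (p.1 ∉ T), isSignedWord_filter (fun a => decide (a ∉ T)) w.2⟩

/-- The induced signed subword of `w` on a set `U` of letters. -/
def SignedWord.restrict (w : SignedWord) (U : Finset ℕ) : SignedWord :=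
  ⟨w.1.filter fun p => decide (p.1 ∈ U), isSignedWord_filter (fun a => decide (a ∈ U)) w.2⟩

/-- Sign-preserving relabeling of letters. -/
def Iso (w w' : List Letter) : Prop :=
  ∃ f : ℕ ≃ ℕ, w' = w.map fun p => (f p.1, p.2)

/-- The basic move `A^ε x A^ε y ↦ x A^(−ε) y A^(−ε)`. -/
def Move (w w' : List Letter) : Prop :=
  ∃ (a : ℕ) (s : Bool) (x y : List Letter),
    w = (a, s) :: (x ++ (a, s) :: y) ∧ w' = x ++ (a, !s) :: (y ++ [(a, !s)])

/-- Cyclic equivalence of signed words: the equivalence relation generated by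
isomorphism together with the basic move. -/
def CyclicEquivL : List Letter → List Letter → Prop :=
  Relation.EqvGen fun w w' => Iso w w' ∨ Move w w'

/-- Cyclic equivalence of signed words. -/
def SignedWord.CyclicEquiv (w w' : SignedWord) : Prop := CyclicEquivL w.1 w'.1

/-- A cyclic equivalence invariant with values in `F`. -/
def WordInvariant (F : Type*) [Field F] (v : SignedWord → F) : Prop :=
  ∀ w w' : SignedWord, w.CyclicEquiv w' → v w = v w'

/-- The prolongation of `v` to the singular signed word `(w, S)` (the letters of
`S` being declared singular), given by inclusion–exclusion. -/
def prolong (F : Type*) [Field F] (v : SignedWord → F) (w : SignedWord) (S : Finset ℕ) : F :=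
  ∑ T ∈ S.powerset, (-1 : F) ^ T.card * v (w.delete T)

/-- `v` is a finite type invariant of degree ≤ `n`: it is a cyclic equivalence
invariant whose prolongation vanishes on every singular signed word with more
than `n` singular letters. -/
def FiniteTypeLe (F : Type*) [Field F] (n : ℕ) (v : SignedWord → F) : Prop :=
  WordInvariant F v ∧
    ∀ (w : SignedWord) (S : Finset ℕ), S ⊆ w.letters → n < S.card →
      prolong F v w S = 0

/-- The empty signed word `φ`. -/
def wordEmpty : SignedWord := ⟨[], by intro p hp; simp at hp⟩

/-- The one-letter positive signed word `AA`. -/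
def wordAA : SignedWord := ⟨[(0, true), (0, true)], by unfold IsSignedWord; decide⟩

/-- The one-letter negative signed word `ĀĀ`. -/
def wordAAneg : SignedWord := ⟨[(0, false), (0, false)], by unfold IsSignedWord; decide⟩

/-- The two-letter signed word `AABB`. -/
def wordAABB : SignedWord := ⟨[(0, true), (0, true), (1, true), (1, true)], by unfold IsSignedWord; decide⟩

/-- The two-letter signed word `AAB̄B̄`. -/
def wordAABnBn : SignedWord := ⟨[(0, true), (0, true), (1, false), (1, false)], by unfold IsSignedWord; decide⟩

/-- The two-letter signed word `AB̄B̄A`. -/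
def wordABnBnA : SignedWord := ⟨[(0, true), (1, false), (1, false), (0, true)], by unfold IsSignedWord; decide⟩

/-- The two-letter signed word `ABAB`. -/
def wordABAB : SignedWord := ⟨[(0, true), (1, true), (0, true), (1, true)], by unfold IsSignedWord; decide⟩

/-- The underlying list of the word `A₁A₁A₂A₂…AₙAₙ` (all letters positive). -/
def wListN (n : ℕ) : List Letter := (List.range n).flatMap fun i => [(i, true), (i, true)]

/-- `Ncount u w`: the number of `k`-element subsets of the letters of `w`
(`k` = number of letters of `u`) whose induced signed subword is cyclically
equivalent to (an isomorphic copy of) `u`. -/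
noncomputable def Ncount (u w : SignedWord) : ℕ := by
  classical
  exact (w.letters.powerset.filter fun U =>
    U.card = u.numLetters ∧ (w.restrict U).CyclicEquiv u).card

theorem prolong_add (F : Type*) [Field F] (v₁ v₂ : SignedWord → F) (w : SignedWord) (S : Finset ℕ) :
    prolong F (v₁ + v₂) w S = prolong F v₁ w S + prolong F v₂ w S := by
  simp [prolong, ← Finset.sum_add_distrib, mul_add]

theorem prolong_smul (F : Type*) [Field F] (c : F) (v : SignedWord → F) (w : SignedWord) (S : Finset ℕ) :
    prolong F (c • v) w S = c * prolong F v w S := by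
  rw [prolong, prolong, Finset.mul_sum]
  exact Finset.sum_congr rfl fun T _ => by simp [mul_left_comm]

/-- The `F`-vector space `Vₙ` of finite type invariants of degree ≤ `n`. -/
def Vn (F : Type*) [Field F] (n : ℕ) : Submodule F (SignedWord → F) where
  carrier := {v | FiniteTypeLe F n v}
  add_mem' := by
    rintro v₁ v₂ ⟨h1, h1'⟩ ⟨h2, h2'⟩
    refine ⟨fun w w' h => by simp [h1 w w' h, h2 w w' h], fun w S hS hc => ?_⟩
    rw [prolong_add, h1' w S hS hc, h2' w S hS hc, add_zero]
  zero_mem' := ⟨fun _ _ _ => rfl, fun w S hS hc => by simp [prolong]⟩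
  smul_mem' := by
    rintro c v ⟨h, h'⟩
    refine ⟨fun w w' hww => by simp [h w w' hww], fun w S hS hc => ?_⟩
    rw [prolong_smul, h' w S hS hc, mul_zero]

/-- Cyclic equivalence as a setoid on signed words. -/
def cycSetoid : Setoid SignedWord :=
  ⟨SignedWord.CyclicEquiv, fun w => Relation.EqvGen.refl w.1,
    fun h => Relation.EqvGen.symm _ _ h, fun h h' => Relation.EqvGen.trans _ _ _ h h'⟩



section AuxNcount

lemma mem_lettersL {l : List Letter} {a : ℕ} : a ∈ lettersL l ↔ ∃ p ∈ l, p.1 = a := by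
  simp [lettersL]

/-- The counting condition, at the level of lists. -/
def condL (u : SignedWord) (l : List Letter) (U : Finset ℕ) : Prop :=
  U.card = u.numLetters ∧ CyclicEquivL (l.filter fun p => decide (p.1 ∈ U)) u.1

open Classical in
noncomputable def NcountL (u : SignedWord) (l : List Letter) : ℕ :=
  ((lettersL l).powerset.filter (condL u l)).card

lemma Ncount_eq (u w : SignedWord) : Ncount u w = NcountL u w.1 := by
  classical
  unfold Ncount NcountL
  apply congrArg Finset.card
  ext U
  simp only [Finset.mem_filter]
  exact Iff.rfl

lemma ceq_congr_left {a b c : List Letter} (h : CyclicEquivL a b) :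
    CyclicEquivL a c ↔ CyclicEquivL b c :=
  ⟨fun h' => Relation.EqvGen.trans _ _ _ (Relation.EqvGen.symm _ _ h) h',
   fun h' => Relation.EqvGen.trans _ _ _ h h'⟩

lemma lettersL_map (f : ℕ ≃ ℕ) (l : List Letter) :
    lettersL (l.map fun p => (f p.1, p.2)) = (lettersL l).image f := by
  ext a
  simp only [mem_lettersL, List.mem_map, Finset.mem_image]
  constructor
  · rintro ⟨p, ⟨q, hq, rfl⟩, rfl⟩
    exact ⟨q.1, ⟨q, hq, rfl⟩, rfl⟩
  · rintro ⟨b, ⟨q, hq, rfl⟩, rfl⟩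
    exact ⟨(f q.1, q.2), ⟨q, hq, rfl⟩, rfl⟩

lemma filter_map_iso (f : ℕ ≃ ℕ) (l : List Letter) (U : Finset ℕ) :
    ((l.map fun p => (f p.1, p.2)).filter fun p => decide (p.1 ∈ U.image f))
      = (l.filter fun p => decide (p.1 ∈ U)).map fun p => (f p.1, p.2) := by
  have hfun : ((fun p : Letter => decide (p.1 ∈ U.image f)) ∘ fun p : Letter => (f p.1, p.2))
      = fun p : Letter => decide (p.1 ∈ U) := by
    funext p
    simp only [Function.comp_apply, decide_eq_decide]
    exact Function.Injective.mem_finset_image f.injective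
  rw [List.filter_map, hfun]

lemma NcountL_iso {l l' : List Letter} (h : Iso l l') (u : SignedWord) :
    NcountL u l = NcountL u l' := by
  classical
  obtain ⟨f, rfl⟩ := h
  have hcond : ∀ U : Finset ℕ,
      condL u l U ↔ condL u (l.map fun p => (f p.1, p.2)) (U.image f) := by
    intro U
    unfold condL
    rw [Finset.card_image_of_injective _ f.injective, filter_map_iso]
    exact and_congr_right fun _ => ceq_congr_left (Relation.EqvGen.rel _ _ (Or.inl ⟨f, rfl⟩))
  unfold NcountL
  rw [lettersL_map]
  refine Finset.card_bij (fun U _ => U.image f) ?_ ?_ ?_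
  · intro U hU
    simp only [Finset.mem_filter, Finset.mem_powerset] at hU ⊢
    exact ⟨Finset.image_subset_image hU.1, (hcond U).mp hU.2⟩
  · intro U _ V _ hUV
    exact Finset.image_injective f.injective hUV
  · intro V hV
    simp only [Finset.mem_filter, Finset.mem_powerset] at hV
    refine ⟨V.image f.symm, ?_, ?_⟩
    · have him : (V.image f.symm).image f = V := by
        rw [Finset.image_image]
        simp [Function.comp_def]
      simp only [Finset.mem_filter, Finset.mem_powerset]
      constructor
      · intro a ha
        simp only [Finset.mem_image] at ha
        obtain ⟨b, hb, rfl⟩ := ha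
        have := hV.1 hb
        simp only [Finset.mem_image] at this
        obtain ⟨c, hc, rfl⟩ := this
        simpa using hc
      · rw [hcond (V.image f.symm), him]
        exact hV.2
    · show (V.image f.symm).image f = V
      rw [Finset.image_image]
      simp [Function.comp_def]

lemma NcountL_move {l l' : List Letter} (h : Move l l') (u : SignedWord) :
    NcountL u l = NcountL u l' := by
  classical
  obtain ⟨a, s, x, y, rfl, rfl⟩ := h
  have hlet : lettersL ((a,s) :: (x ++ (a,s) :: y))
      = lettersL (x ++ (a,!s) :: (y ++ [(a,!s)])) := by
    ext b
    simp only [mem_lettersL, List.mem_cons, List.mem_append, List.not_mem_nil, or_false]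
    constructor
    · rintro ⟨p, (rfl | hp | rfl | hp), rfl⟩
      · exact ⟨(a,!s), by tauto, rfl⟩
      · exact ⟨p, by tauto, rfl⟩
      · exact ⟨(a,!s), by tauto, rfl⟩
      · exact ⟨p, by tauto, rfl⟩
    · rintro ⟨p, (hp | rfl | hp | rfl), rfl⟩
      · exact ⟨p, by tauto, rfl⟩
      · exact ⟨(a,s), by tauto, rfl⟩
      · exact ⟨p, by tauto, rfl⟩
      · exact ⟨(a,s), by tauto, rfl⟩
  unfold NcountL
  rw [hlet]
  apply congrArg Finset.card
  apply Finset.filter_congr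
  intro U _
  unfold condL
  by_cases ha : a ∈ U
  · have hmv : Move (((a,s) :: (x ++ (a,s) :: y)).filter fun p => decide (p.1 ∈ U))
        ((x ++ (a,!s) :: (y ++ [(a,!s)])).filter fun p => decide (p.1 ∈ U)) := by
      refine ⟨a, s, x.filter (fun p => decide (p.1 ∈ U)),
        y.filter (fun p => decide (p.1 ∈ U)), ?_, ?_⟩ <;>
        simp [List.filter_append, List.filter_cons, ha]
    exact and_congr_right fun _ => ceq_congr_left (Relation.EqvGen.rel _ _ (Or.inr hmv))
  · have heq : (((a,s) :: (x ++ (a,s) :: y)).filter fun p => decide (p.1 ∈ U))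
        = ((x ++ (a,!s) :: (y ++ [(a,!s)])).filter fun p => decide (p.1 ∈ U)) := by
      simp [List.filter_append, List.filter_cons, ha]
    rw [heq]

lemma NcountL_inv (u : SignedWord) {l l' : List Letter} (h : CyclicEquivL l l') :
    NcountL u l = NcountL u l' := by
  induction h with
  | rel a b hab =>
    rcases hab with h | h
    · exact NcountL_iso h u
    · exact NcountL_move h u
  | refl _ => rfl
  | symm _ _ _ ih => exact ih.symm
  | trans _ _ _ _ _ ih1 ih2 => exact ih1.trans ih2

lemma lettersL_delete (w : SignedWord) (T : Finset ℕ) :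
    lettersL (w.delete T).1 = w.letters \ T := by
  ext a
  simp only [SignedWord.letters, SignedWord.delete, mem_lettersL, List.mem_filter,
    Finset.mem_sdiff, decide_eq_true_eq]
  constructor
  · rintro ⟨p, ⟨hp, hT⟩, rfl⟩; exact ⟨⟨p, hp, rfl⟩, hT⟩
  · rintro ⟨⟨p, hp, rfl⟩, hT⟩; exact ⟨p, ⟨hp, hT⟩, rfl⟩

lemma restrict_delete (w : SignedWord) (T U : Finset ℕ) (h : Disjoint U T) :
    ((w.delete T).1.filter fun p => decide (p.1 ∈ U)) = w.1.filter fun p => decide (p.1 ∈ U) := by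
  show (List.filter _ (List.filter _ w.1)) = _
  rw [List.filter_filter]
  apply List.filter_congr
  intro p _
  by_cases hU : p.1 ∈ U
  · have hT : p.1 ∉ T := Finset.disjoint_left.mp h hU
    simp [hU, hT]
  · simp [hU]

open Classical in
lemma Ncount_delete (u w : SignedWord) (T : Finset ℕ) :
    Ncount u (w.delete T) = ((w.letters \ T).powerset.filter (condL u w.1)).card := by
  classical
  rw [Ncount_eq]
  unfold NcountL
  rw [lettersL_delete]
  apply congrArg Finset.card
  apply Finset.filter_congr
  intro U hU
  rw [Finset.mem_powerset, Finset.subset_sdiff] at hU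
  unfold condL
  rw [restrict_delete w T U hU.2]

lemma alt_sum_zero (F : Type*) [Field F] (s : Finset ℕ) (hs : s.Nonempty) :
    ∑ T ∈ s.powerset, (-1 : F) ^ T.card = 0 := by
  have h := Finset.sum_powerset_neg_one_pow_card_of_nonempty hs
  have h2 : ((∑ m ∈ s.powerset, (-1:ℤ)^m.card : ℤ) : F)
      = ∑ T ∈ s.powerset, (-1:F)^T.card := by push_cast; rfl
  rw [← h2, h, Int.cast_zero]

end AuxNcount

/-- for every signed word `u` with `k` letters, the
subword-counting function `N_u` is a cyclic equivalence invariant and a finite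
type invariant of degree ≤ `k`. -/
theorem Ncount_finiteType (F : Type*) [Field F] [CharZero F] (u : SignedWord) :
    WordInvariant F (fun w => (Ncount u w : F)) ∧
    FiniteTypeLe F u.numLetters (fun w => (Ncount u w : F)) := by
  classical
  have hinv : WordInvariant F (fun w => (Ncount u w : F)) := by
    intro w w' h
    simp only
    rw [Ncount_eq, Ncount_eq, NcountL_inv u h]
  refine ⟨hinv, hinv, ?_⟩
  intro w S hS hcard
  unfold prolong
  simp only
  set A := w.letters.powerset.filter (condL u w.1) with hA
  have hrw : ∀ T ∈ S.powerset, ((Ncount u (w.delete T) : F))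
      = ∑ U ∈ A, if Disjoint T U then (1:F) else 0 := by
    intro T hT
    rw [Ncount_delete]
    have hset : (w.letters \ T).powerset.filter (condL u w.1)
        = A.filter fun U => Disjoint T U := by
      ext U
      simp only [hA, Finset.mem_filter, Finset.mem_powerset, Finset.subset_sdiff,
        disjoint_comm (a := U)]
      tauto
    rw [hset, ← Finset.sum_boole]
  calc ∑ T ∈ S.powerset, (-1:F)^T.card * (Ncount u (w.delete T) : F)
      = ∑ T ∈ S.powerset, ∑ U ∈ A, if Disjoint T U then (-1:F)^T.card else 0 := by
        refine Finset.sum_congr rfl fun T hT => ?_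
        rw [hrw T hT, Finset.mul_sum]
        exact Finset.sum_congr rfl fun U _ => by rw [mul_ite, mul_one, mul_zero]
    _ = ∑ U ∈ A, ∑ T ∈ S.powerset, if Disjoint T U then (-1:F)^T.card else 0 :=
        Finset.sum_comm
    _ = ∑ U ∈ A, ∑ T ∈ (S \ U).powerset, (-1:F)^T.card := by
        refine Finset.sum_congr rfl fun U _ => ?_
        rw [← Finset.sum_filter]
        apply Finset.sum_congr ?_ fun _ _ => rfl
        ext T
        simp only [Finset.mem_filter, Finset.mem_powerset, Finset.subset_sdiff]
    _ = 0 := by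
        refine Finset.sum_eq_zero fun U hU => ?_
        have hUcard : U.card = u.numLetters := by
          rw [hA, Finset.mem_filter] at hU
          exact hU.2.1
        have hne : (S \ U).Nonempty := by
          rw [Finset.sdiff_nonempty]
          intro hsub
          have := Finset.card_le_card hsub
          omega
        exact alt_sum_zero F _ hne
end

section
/- A finite type invariant of degree ≤ n is determined by its values on signed words with at most n letters: if v₁ and v₂ are finite type invariants of degree ≤ n that agree on every signed word with at most n letters, then v₁ = v₂. Consequently V_n is finite-dimensional, of dimension at most the number of cyclic equivalence classes of signed words with at most n letters. -/
lemma delete_empty (w : SignedWord) : w.delete ∅ = w := by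
  apply Subtype.ext
  simp [SignedWord.delete]

lemma letters_delete (w : SignedWord) (T : Finset ℕ) :
    (w.delete T).letters = w.letters \ T := by
  ext a
  simp only [SignedWord.delete, SignedWord.letters, lettersL, List.mem_toFinset, List.mem_map,
    List.mem_filter, Finset.mem_sdiff, decide_eq_true_eq]
  aesop

lemma numLetters_delete_lt (w : SignedWord) {T : Finset ℕ} (hT : T ⊆ w.letters)
    (hne : T.Nonempty) : (w.delete T).numLetters < w.numLetters := by
  unfold SignedWord.numLetters
  rw [letters_delete, Finset.card_sdiff_of_subset hT]
  have h1 := Finset.card_le_card hT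
  have h2 := Finset.card_pos.mpr hne
  omega

lemma count_beq_indep (l : List Letter) (a : Letter) :
    @List.count Letter instBEqProd a l = @List.count Letter instBEqOfDecidableEq a l := by
  show @List.countP Letter _ l = @List.countP Letter _ l
  apply List.countP_congr
  intro x _
  constructor
  · intro h; obtain rfl : x = a := @eq_of_beq Letter instBEqProd _ x a h
    exact decide_eq_true rfl
  · intro h; obtain rfl : x = a := of_decide_eq_true h
    exact @beq_self_eq_true Letter instBEqProd _ x

lemma isSignedWord_map {w : List Letter} (hw : IsSignedWord w) (f : ℕ ≃ ℕ) :
    IsSignedWord (w.map fun p => (f p.1, p.2)) := by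
  have hinj : Function.Injective (fun p : Letter => ((f p.1, p.2) : Letter)) := by
    intro p q h
    simp only [Prod.mk.injEq] at h
    exact Prod.ext (f.injective h.1) h.2
  intro p hp
  obtain ⟨q, hq, rfl⟩ := List.mem_map.mp hp
  constructor
  · have h2 := (hw q hq).1
    rw [count_beq_indep] at h2 ⊢
    exact (count_beq_indep _ _).symm.trans ((List.count_map_of_injective (β := Letter) w (fun p => (f p.1, p.2)) hinj q).trans ((count_beq_indep w q).trans h2))
  · intro r hr h1
    obtain ⟨r', hr', rfl⟩ := List.mem_map.mp hr
    exact (hw r' hr').2 q hq (f.injective h1.symm) |>.symm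

lemma length_eq_two_mul (w : SignedWord) : w.1.length = 2 * w.numLetters := by
  classical
  have h0 : (w.1.map Prod.fst).length = w.1.length := List.length_map _
  rw [← h0, ← List.sum_toFinset_count_eq_length]
  have : ∀ a ∈ (w.1.map Prod.fst).toFinset, (w.1.map Prod.fst).count a = 2 := by
    intro a ha
    rw [List.mem_toFinset, List.mem_map] at ha
    obtain ⟨p₀, hp₀, rfl⟩ := ha
    rw [List.count_eq_countP, List.countP_map]
    have : w.1.countP ((fun b => b == p₀.1) ∘ Prod.fst) = w.1.count p₀ := by
      rw [List.count_eq_countP]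
      apply List.countP_congr
      intro x hx
      simp only [Function.comp_apply, beq_iff_eq]
      constructor
      · intro h; exact Prod.ext h ((w.2 p₀ hp₀).2 x hx h)
      · intro h; rw [h]
    rw [this]
    exact (w.2 p₀ hp₀).1
  rw [Finset.sum_congr rfl this, Finset.sum_const, smul_eq_mul]
  show _ * 2 = 2 * (lettersL w.1).card
  rw [mul_comm]; rfl

lemma exists_perm_mapsto (S : Finset ℕ) :
    ∃ f : ℕ ≃ ℕ, ∀ a ∈ S, f a ∈ Finset.range S.card := by
  classical
  have hcard : S.card = (Finset.range S.card).card := (Finset.card_range _).symm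
  let e₁ : {x // x ∈ S} ≃ {x // x ∈ Finset.range S.card} := S.equivOfCardEq hcard
  have h₂ : (↑S : Set ℕ)ᶜ.Infinite := (S.finite_toSet).infinite_compl
  have h₃ : (↑(Finset.range S.card) : Set ℕ)ᶜ.Infinite :=
    ((Finset.range S.card).finite_toSet).infinite_compl
  haveI := h₂.to_subtype
  haveI := h₃.to_subtype
  obtain ⟨d₂⟩ := nonempty_denumerable ↥(↑S : Set ℕ)ᶜ
  obtain ⟨d₃⟩ := nonempty_denumerable ↥(↑(Finset.range S.card) : Set ℕ)ᶜ
  let e₂ : ↥(↑S : Set ℕ)ᶜ ≃ ↥(↑(Finset.range S.card) : Set ℕ)ᶜ :=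
    (@Denumerable.eqv _ d₂).trans (@Denumerable.eqv _ d₃).symm
  let e₁' : ↥(↑S : Set ℕ) ≃ ↥(↑(Finset.range S.card) : Set ℕ) :=
    (Equiv.setCongr rfl).trans e₁
  refine ⟨((Equiv.Set.sumCompl (↑S : Set ℕ)).symm.trans
    ((e₁'.sumCongr e₂).trans (Equiv.Set.sumCompl _))), fun a ha => ?_⟩
  have hmem : a ∈ (↑S : Set ℕ) := ha
  simp only [Equiv.trans_apply, Equiv.Set.sumCompl_symm_apply_of_mem hmem,
    Equiv.sumCongr_apply, Sum.map_inl, Equiv.Set.sumCompl_apply_inl]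
  exact (e₁' ⟨a, hmem⟩).2

lemma exists_small_rep (w : SignedWord) :
    ∃ w' : SignedWord, w.CyclicEquiv w' ∧ (∀ p ∈ w'.1, p.1 < w.numLetters) ∧
      w'.1.length = w.1.length := by
  obtain ⟨f, hf⟩ := exists_perm_mapsto w.letters
  refine ⟨⟨w.1.map fun p => (f p.1, p.2), isSignedWord_map w.2 f⟩,
    Relation.EqvGen.rel _ _ (Or.inl ⟨f, rfl⟩), ?_, List.length_map _⟩
  intro p hp
  obtain ⟨q, hq, rfl⟩ := List.mem_map.mp hp
  have : q.1 ∈ w.letters := List.mem_toFinset.mpr (List.mem_map.mpr ⟨q, hq, rfl⟩)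
  simpa [SignedWord.numLetters] using Finset.mem_range.mp (hf q.1 this)

lemma classes_finite (n : ℕ) :
    Finite {c : Quotient cycSetoid //
      ∃ w : SignedWord, w.numLetters ≤ n ∧ Quotient.mk cycSetoid w = c} := by
  classical
  let g : List ({x : ℕ // x < n} × Bool) → List Letter :=
    List.map (fun p => (p.1.1, p.2))
  have hfin : Finite {l : List ({x : ℕ // x < n} × Bool) // l.length ≤ 2 * n} :=
    (List.finite_length_le _ (2 * n)).to_subtype
  let h : {l : List ({x : ℕ // x < n} × Bool) // l.length ≤ 2 * n} →
      {c : Quotient cycSetoid //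
        ∃ w : SignedWord, w.numLetters ≤ n ∧ Quotient.mk cycSetoid w = c} :=
    fun l =>
      if hw : ∃ hs : IsSignedWord (g l.1),
          SignedWord.numLetters ⟨g l.1, hs⟩ ≤ n then
        ⟨Quotient.mk cycSetoid ⟨g l.1, hw.choose⟩, ⟨_, hw.choose_spec, rfl⟩⟩
      else ⟨Quotient.mk cycSetoid wordEmpty,
        ⟨wordEmpty, by simp [wordEmpty, SignedWord.numLetters, SignedWord.letters, lettersL], rfl⟩⟩
  apply Finite.of_surjective h
  rintro ⟨c, w, hwn, rfl⟩
  obtain ⟨w', hcyc, hsmall, hlen⟩ := exists_small_rep w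
  have hsmall' : ∀ p ∈ w'.1, p.1 < n := fun p hp => lt_of_lt_of_le (hsmall p hp) hwn
  set l₀ : List ({x : ℕ // x < n} × Bool) :=
    w'.1.attach.map fun q => ((⟨q.1.1, hsmall' q.1 q.2⟩ : {x : ℕ // x < n}), q.1.2) with hl₀
  have hgl : g l₀ = w'.1 := by
    show List.map _ (List.map _ _) = _
    rw [List.map_map]
    have heq : ((fun p : {x : ℕ // x < n} × Bool => ((p.1.1, p.2) : Letter)) ∘
        fun q : {q : Letter // q ∈ w'.1} =>
          ((⟨q.1.1, hsmall' q.1 q.2⟩ : {x : ℕ // x < n}), q.1.2)) = fun q => q.1 := rfl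
    rw [heq]
    exact List.attach_map_subtype_val _
  have hws : IsSignedWord (g l₀) := hgl ▸ w'.2
  have hcard : SignedWord.numLetters ⟨g l₀, hws⟩ ≤ n := by
    have hsub : SignedWord.letters ⟨g l₀, hws⟩ ⊆ Finset.range n := by
      intro a ha
      simp only [SignedWord.letters, lettersL, List.mem_toFinset, List.mem_map] at ha
      obtain ⟨p, hp, rfl⟩ := ha
      rw [hgl] at hp
      exact Finset.mem_range.mpr (hsmall' p hp)
    simpa [SignedWord.numLetters] using Finset.card_le_card hsub
  refine ⟨⟨l₀, ?_⟩, ?_⟩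
  · rw [hl₀, List.length_map, List.length_attach, hlen, length_eq_two_mul]
    omega
  · show dite _ _ _ = _
    rw [dif_pos ⟨hws, hcard⟩]
    apply Subtype.ext
    apply Quotient.sound
    show SignedWord.CyclicEquiv _ _
    show CyclicEquivL (g l₀) w.1
    rw [hgl]
    exact Relation.EqvGen.symm _ _ hcyc

lemma vanish_of_small (F : Type*) [Field F] (n : ℕ) (v : SignedWord → F)
    (hv : FiniteTypeLe F n v) (hs : ∀ w, w.numLetters ≤ n → v w = 0) : v = 0 := by
  classical
  suffices h : ∀ k (w : SignedWord), w.numLetters = k → v w = 0 by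
    funext w; exact h _ w rfl
  intro k
  induction k using Nat.strong_induction_on with
  | _ k ih =>
    intro w hw
    by_cases hkn : k ≤ n
    · exact hs w (hw ▸ hkn)
    · have hc : w.letters.card = k := hw
      have h0 := hv.2 w w.letters (le_refl _) (by omega)
      rw [prolong, ← Finset.add_sum_erase _ _ (Finset.empty_mem_powerset _)] at h0
      simp only [Finset.card_empty, pow_zero, one_mul, delete_empty] at h0
      have hrest : ∑ T ∈ (w.letters.powerset.erase ∅),
          (-1 : F) ^ T.card * v (w.delete T) = 0 := by
        apply Finset.sum_eq_zero
        intro T hT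
        rw [Finset.mem_erase, Finset.mem_powerset] at hT
        have hlt : (w.delete T).numLetters < k :=
          hw ▸ numLetters_delete_lt w hT.2 (Finset.nonempty_iff_ne_empty.mpr hT.1)
        rw [ih _ hlt _ rfl, mul_zero]
      rw [hrest, add_zero] at h0
      exact h0

/-- a finite type invariant of degree ≤ `n` is determined by its
values on signed words with at most `n` letters; consequently `Vₙ` is
finite-dimensional, of dimension at most the number of cyclic equivalence
classes of signed words with at most `n` letters. -/
theorem finiteTypeLe_determined_by_small_words (F : Type*) [Field F] (n : ℕ) :
    (∀ v₁ v₂ : SignedWord → F, FiniteTypeLe F n v₁ → FiniteTypeLe F n v₂ →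
      (∀ w : SignedWord, w.numLetters ≤ n → v₁ w = v₂ w) → v₁ = v₂) ∧
    FiniteDimensional F (Vn F n) ∧
    Module.finrank F (Vn F n) ≤
      Nat.card {c : Quotient cycSetoid //
        ∃ w : SignedWord, w.numLetters ≤ n ∧ Quotient.mk cycSetoid w = c} := by
  classical
  have hmem : ∀ v : SignedWord → F, v ∈ Vn F n ↔ FiniteTypeLe F n v := fun _ => Iff.rfl
  have part1 : ∀ v₁ v₂ : SignedWord → F, FiniteTypeLe F n v₁ → FiniteTypeLe F n v₂ →
      (∀ w : SignedWord, w.numLetters ≤ n → v₁ w = v₂ w) → v₁ = v₂ := by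
    intro v₁ v₂ h₁ h₂ hsm
    have hsub : FiniteTypeLe F n (v₁ - v₂) := by
      have := (Vn F n).sub_mem ((hmem v₁).mpr h₁) ((hmem v₂).mpr h₂)
      exact (hmem _).mp this
    have h0 : v₁ - v₂ = 0 := vanish_of_small F n (v₁ - v₂) hsub fun w hw => by
      simp [hsm w hw]
    exact sub_eq_zero.mp h0
  refine ⟨part1, ?_, ?_⟩
  all_goals {
    haveI : Finite {c : Quotient cycSetoid //
        ∃ w : SignedWord, w.numLetters ≤ n ∧ Quotient.mk cycSetoid w = c} := classes_finite n
    haveI : Fintype {c : Quotient cycSetoid //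
        ∃ w : SignedWord, w.numLetters ≤ n ∧ Quotient.mk cycSetoid w = c} := Fintype.ofFinite _
    set ι := {c : Quotient cycSetoid //
        ∃ w : SignedWord, w.numLetters ≤ n ∧ Quotient.mk cycSetoid w = c} with hι
    let rep : ι → SignedWord := fun c => c.2.choose
    have hrep : ∀ c : ι, (rep c).numLetters ≤ n ∧ Quotient.mk cycSetoid (rep c) = c.1 :=
      fun c => c.2.choose_spec
    let Φ : Vn F n →ₗ[F] (ι → F) :=
      { toFun := fun v c => v.1 (rep c)
        map_add' := fun v₁ v₂ => rfl
        map_smul' := fun c v => rfl }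
    have hinj : Function.Injective Φ := by
      rw [injective_iff_map_eq_zero]
      intro v hv
      apply Subtype.ext
      have hft : FiniteTypeLe F n v.1 := (hmem v.1).mp v.2
      apply vanish_of_small F n v.1 hft
      intro w hw
      have hc : (⟨Quotient.mk cycSetoid w, ⟨w, hw, rfl⟩⟩ : ι) ∈ Set.univ := trivial
      set c : ι := ⟨Quotient.mk cycSetoid w, ⟨w, hw, rfl⟩⟩ with hcdef
      have h1 : v.1 (rep c) = 0 := congrFun hv c
      have h2 : (rep c).CyclicEquiv w := by
        have := (hrep c).2
        rw [hcdef] at this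
        exact Quotient.exact this
      rw [← hft.1 (rep c) w h2, h1]
    have hfd : FiniteDimensional F (ι → F) := by infer_instance
    haveI : FiniteDimensional F (Vn F n) := FiniteDimensional.of_injective Φ hinj
    first
    | infer_instance
    | { have hle := LinearMap.finrank_le_finrank_of_injective hinj
        rwa [Module.finrank_pi, ← Nat.card_eq_fintype_card] at hle }
  }
end

section
/- Let v be a finite type invariant of degree ≤ 2 and for each n ≥ 0 let wₙ = A₁A₁A₂A₂…AₙAₙ be the signed word with n letters, all positive, in which the two occurrences of each letter are adjacent. Then v(wₙ) = v(φ) + n·(v(AA) − v(φ)) + (n(n−1)/2)·(v(AABB) − 2v(AA) + v(φ)), where AA = w₁ and AABB = w₂. -/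
lemma wListN_succ (n : ℕ) : wListN (n+1) = wListN n ++ [(n,true),(n,true)] := by
  simp [wListN, List.range_succ]

lemma mem_wListN {p : Letter} {n : ℕ} : p ∈ wListN n ↔ p.1 < n ∧ p.2 = true := by
  simp only [wListN, List.mem_flatMap, List.mem_range]
  constructor
  · rintro ⟨a, ha, hp⟩
    simp only [List.mem_cons, List.mem_singleton, List.not_mem_nil, or_false] at hp
    rcases hp with h | h <;> simp [h, ha]
  · rintro ⟨h1, h2⟩
    exact ⟨p.1, h1, by simp [Prod.ext_iff, h2]⟩

lemma count_wListN (i : ℕ) (n : ℕ) :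
    (wListN n).count (i, true) = if i < n then 2 else 0 := by
  induction n with
  | zero => simp [wListN]
  | succ n ih =>
    rw [wListN_succ, List.count_append, ih]
    by_cases h : i = n
    · subst h
      simp [List.count_cons]
    · have h0 : List.count (i, true) [(n, true), (n, true)] = 0 := by
        simp [List.count_cons, Prod.ext_iff, h, Ne.symm h]
      rw [h0]
      by_cases h2 : i < n
      · rw [if_pos h2, if_pos (by omega)]
      · rw [if_neg h2, if_neg (by omega)]

lemma isSignedWord_wListN (n : ℕ) : IsSignedWord (wListN n) := by
  intro p hp
  obtain ⟨h1, h2⟩ := mem_wListN.mp hp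
  have hp' : p = (p.1, true) := by
    obtain ⟨i, s⟩ := p; simpa using h2
  constructor
  · rw [hp', count_wListN, if_pos h1]
  · intro q hq _
    rw [(mem_wListN.mp hq).2, h2]

def Wn (n : ℕ) : SignedWord := ⟨wListN n, isSignedWord_wListN n⟩

lemma letters_Wn (n : ℕ) : (Wn n).letters = Finset.range n := by
  ext a
  simp only [SignedWord.letters, lettersL, Wn, List.mem_toFinset, List.mem_map,
    Finset.mem_range]
  constructor
  · rintro ⟨p, hp, rfl⟩; exact (mem_wListN.mp hp).1
  · intro h; exact ⟨(a, true), mem_wListN.mpr ⟨h, rfl⟩, rfl⟩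

def cT (T : Finset ℕ) (a : ℕ) : ℕ := (T ∩ Finset.range a).card

lemma cT_succ (T : Finset ℕ) (a : ℕ) :
    cT T (a+1) = cT T a + (if a ∈ T then 1 else 0) := by
  unfold cT
  rw [Finset.range_add_one]
  by_cases h : a ∈ T
  · rw [if_pos h]
    have he : T ∩ insert a (Finset.range a) = insert a (T ∩ Finset.range a) := by
      ext x
      simp only [Finset.mem_inter, Finset.mem_insert, Finset.mem_range]
      constructor
      · rintro ⟨hx, rfl | hx2⟩
        · exact Or.inl rfl
        · exact Or.inr ⟨hx, hx2⟩
      · rintro (rfl | ⟨hx, hx2⟩)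
        · exact ⟨h, Or.inl rfl⟩
        · exact ⟨hx, Or.inr hx2⟩
    rw [he, Finset.card_insert_of_notMem (by simp)]
  · rw [if_neg h, add_zero]
    have he : T ∩ insert a (Finset.range a) = T ∩ Finset.range a := by
      ext x
      simp only [Finset.mem_inter, Finset.mem_insert, Finset.mem_range]
      constructor
      · rintro ⟨hx, rfl | hx2⟩
        · exact absurd hx h
        · exact ⟨hx, hx2⟩
      · rintro ⟨hx, hx2⟩
        exact ⟨hx, Or.inr hx2⟩
    rw [he]

lemma cT_le (T : Finset ℕ) (a : ℕ) : cT T a ≤ a := by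
  calc (T ∩ Finset.range a).card ≤ (Finset.range a).card :=
        Finset.card_le_card Finset.inter_subset_right
    _ = a := Finset.card_range a

lemma cT_mono (T : Finset ℕ) {a b : ℕ} (h : a ≤ b) : cT T a ≤ cT T b :=
  Finset.card_le_card (Finset.inter_subset_inter le_rfl (Finset.range_subset_range.mpr h))

lemma cT_le_add (T : Finset ℕ) (a : ℕ) : ∀ k, cT T (a + k) ≤ cT T a + k := by
  intro k
  induction k with
  | zero => simp
  | succ k ih =>
    rw [show a + (k+1) = (a+k) + 1 by ring, cT_succ]
    split <;> omega

lemma cT_succ_of_mem {T : Finset ℕ} {a : ℕ} (h : a ∈ T) : cT T (a+1) = cT T a + 1 := by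
  rw [cT_succ, if_pos h]

lemma cT_succ_of_not_mem {T : Finset ℕ} {a : ℕ} (h : a ∉ T) : cT T (a+1) = cT T a := by
  rw [cT_succ, if_neg h, add_zero]

lemma cT_bound_not_mem {T : Finset ℕ} {a b : ℕ} (ha : a ∉ T) (hab : a < b) :
    cT T b + 1 ≤ cT T a + (b - a) := by
  have h1 : cT T b ≤ cT T (a+1) + (b - (a+1)) := by
    have h2 := cT_le_add T (a+1) (b - (a+1))
    rwa [show a + 1 + (b - (a+1)) = b by omega] at h2
  rw [cT_succ_of_not_mem ha] at h1
  omega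

lemma cT_lt_of_mem {T : Finset ℕ} {a b : ℕ} (ha : a ∈ T) (hab : a < b) :
    cT T a + 1 ≤ cT T b := by
  rw [← cT_succ_of_mem ha]
  exact cT_mono T (by omega)

section Perm

variable (T : Finset ℕ) (n : ℕ)

/-- The relabeling map: survivors get their rank, deleted letters are packed above. -/
def F0 (a : ℕ) : ℕ :=
  if a < n then (if a ∈ T then (n - cT T n) + cT T a else a - cT T a) else a

lemma F0_lt {a : ℕ} (ha : a < n) : F0 T n a < n := by
  unfold F0
  rw [if_pos ha]
  by_cases h : a ∈ T
  · rw [if_pos h]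
    have h1 := cT_lt_of_mem h ha
    have h2 := cT_le T n
    omega
  · rw [if_neg h]
    omega

lemma F0_survivor_lt {a : ℕ} (ha : a < n) (haT : a ∉ T) :
    a - cT T a < n - cT T n := by
  have h1 := cT_bound_not_mem haT ha
  have h2 := cT_le T a
  omega

lemma F0_injOn {a b : ℕ} (ha : a < n) (hb : b < n) (h : F0 T n a = F0 T n b) : a = b := by
  unfold F0 at h
  rw [if_pos ha, if_pos hb] at h
  rcases lt_trichotomy a b with hab | hab | hab
  · exfalso
    by_cases h1 : a ∈ T <;> by_cases h2 : b ∈ T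
    · rw [if_pos h1, if_pos h2] at h
      have := cT_lt_of_mem h1 hab
      omega
    · rw [if_pos h1, if_neg h2] at h
      have := F0_survivor_lt T n hb h2
      omega
    · rw [if_neg h1, if_pos h2] at h
      have := F0_survivor_lt T n ha h1
      omega
    · rw [if_neg h1, if_neg h2] at h
      have h3 := cT_bound_not_mem h1 hab
      have h4 := cT_le T a
      omega
  · exact hab
  · exfalso
    by_cases h1 : a ∈ T <;> by_cases h2 : b ∈ T
    · rw [if_pos h1, if_pos h2] at h
      have := cT_lt_of_mem h2 hab
      omega
    · rw [if_pos h1, if_neg h2] at h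
      have := F0_survivor_lt T n hb h2
      omega
    · rw [if_neg h1, if_pos h2] at h
      have := F0_survivor_lt T n ha h1
      omega
    · rw [if_neg h1, if_neg h2] at h
      have h3 := cT_bound_not_mem h2 hab
      have h4 := cT_le T b
      omega

lemma F0_id {a : ℕ} (ha : ¬ a < n) : F0 T n a = a := by
  unfold F0; rw [if_neg ha]

lemma F0_bijective : Function.Bijective (F0 T n) := by
  constructor
  · intro a b h
    by_cases ha : a < n <;> by_cases hb : b < n
    · exact F0_injOn T n ha hb h
    · exfalso; rw [F0_id T n hb] at h; have := F0_lt T n ha; omega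
    · exfalso; rw [F0_id T n ha] at h; have := F0_lt T n hb; omega
    · rwa [F0_id T n ha, F0_id T n hb] at h
  · intro b
    by_cases hb : b < n
    · have hsurj := Finset.surj_on_of_inj_on_of_card_le
        (s := Finset.range n) (t := Finset.range n)
        (fun a _ => F0 T n a)
        (fun a ha => Finset.mem_range.mpr (F0_lt T n (Finset.mem_range.mp ha)))
        (fun a₁ a₂ ha₁ ha₂ h =>
          F0_injOn T n (Finset.mem_range.mp ha₁) (Finset.mem_range.mp ha₂) h)
        le_rfl
      obtain ⟨a, _, hab⟩ := hsurj b (Finset.mem_range.mpr hb)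
      exact ⟨a, hab.symm⟩
    · exact ⟨b, F0_id T n hb⟩

/-- The relabeling as an `Equiv`. -/
noncomputable def eT : ℕ ≃ ℕ := Equiv.ofBijective (F0 T n) (F0_bijective T n)

lemma flatMap_F0 : ∀ k, k ≤ n →
    ((List.range k).flatMap fun i =>
      if i ∈ T then ([] : List Letter) else [(F0 T n i, true), (F0 T n i, true)])
    = wListN (k - cT T k) := by
  intro k
  induction k with
  | zero => intro _; simp [wListN]
  | succ k ih =>
    intro hk
    rw [List.range_succ, List.flatMap_append, ih (by omega)]
    by_cases h : k ∈ T
    · rw [show (k+1) - cT T (k+1) = k - cT T k by rw [cT_succ_of_mem h]; omega]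
      simp [h]
    · have hF : F0 T n k = k - cT T k := by
        unfold F0; rw [if_pos (by omega), if_neg h]
      have hc := cT_le T k
      rw [show (k+1) - cT T (k+1) = (k - cT T k) + 1 by rw [cT_succ_of_not_mem h]; omega]
      rw [wListN_succ]
      simp [h, hF]

end Perm


lemma iso_delete (T : Finset ℕ) (n : ℕ) :
    Iso ((Wn n).delete T).1 (wListN (n - cT T n)) := by
  refine ⟨eT T n, ?_⟩
  show wListN (n - cT T n) = (((wListN n).filter fun p => decide (p.1 ∉ T)).map
    fun p => (F0 T n p.1, p.2))
  rw [← flatMap_F0 T n n le_rfl, wListN, List.filter_flatMap, List.map_flatMap]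
  congr 1
  funext i
  by_cases h : i ∈ T <;> simp [h]

section MainAux

variable {F : Type*} [Field F] [CharZero F]

lemma v_iso (v : SignedWord → F) (hv : WordInvariant F v) {w w' : SignedWord}
    (h : Iso w.1 w'.1) : v w = v w' :=
  hv w w' (Relation.EqvGen.rel _ _ (Or.inl h))

lemma v_delete (v : SignedWord → F) (hv : WordInvariant F v) (n : ℕ) (T : Finset ℕ)
    (hT : T ⊆ Finset.range n) :
    v ((Wn n).delete T) = v (Wn (n - T.card)) := by
  have hc : cT T n = T.card := by
    unfold cT
    rw [Finset.inter_eq_left.mpr hT]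
  exact v_iso v hv (show Iso _ (Wn (n - T.card)).1 from hc ▸ iso_delete T n)

lemma rec3 (v : SignedWord → F) (hv : FiniteTypeLe F 2 v) (k : ℕ) :
    v (Wn (k+3)) = 3 * v (Wn (k+2)) - 3 * v (Wn (k+1)) + v (Wn k) := by
  have hS : ({0,1,2} : Finset ℕ) ⊆ (Wn (k+3)).letters := by
    rw [letters_Wn]
    intro x hx
    simp only [Finset.mem_insert, Finset.mem_singleton] at hx
    simp only [Finset.mem_range]
    omega
  have hcard : ({0,1,2} : Finset ℕ).card = 3 := by decide
  have h0 := hv.2 (Wn (k+3)) {0,1,2} hS (by rw [hcard]; norm_num)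
  rw [prolong] at h0
  have hsum : ∀ T ∈ ({0,1,2} : Finset ℕ).powerset,
      (-1:F)^T.card * v ((Wn (k+3)).delete T)
        = (fun c => (-1:F)^c * v (Wn (k+3-c))) T.card := by
    intro T hT
    rw [Finset.mem_powerset] at hT
    have hsub : T ⊆ Finset.range (k+3) := hT.trans (by
      intro x hx
      simp only [Finset.mem_insert, Finset.mem_singleton] at hx
      simp only [Finset.mem_range]
      omega)
    simp only
    rw [v_delete v hv.1 _ _ hsub]
  rw [Finset.sum_congr rfl hsum,
    Finset.sum_powerset_apply_card (f := fun c => (-1:F)^c * v (Wn (k+3-c))), hcard] at h0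
  norm_num [Finset.sum_range_succ, show k+3-1 = k+2 by omega, show k+3-2 = k+1 by omega,
    show k+3-3 = k by omega] at h0
  linear_combination h0

lemma castC (j : ℕ) : ((j * (j - 1) / 2 : ℕ) : F) = (j : F) * ((j : F) - 1) / 2 := by
  rcases j with _ | i
  · norm_num
  · have hd : 2 ∣ (i + 1) * ((i + 1) - 1) := by
      rw [Nat.succ_sub_one, Nat.mul_comm]
      exact (Nat.even_mul_succ_self i).two_dvd
    rw [Nat.cast_div hd (by norm_num)]
    rw [Nat.succ_sub_one]
    push_cast
    ring

lemma key_formula (v : SignedWord → F) (hv : FiniteTypeLe F 2 v) : ∀ n : ℕ, v (Wn n) =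
    v wordEmpty + (n : F) * (v wordAA - v wordEmpty) +
      ((n * (n - 1) / 2 : ℕ) : F) * (v wordAABB - 2 * v wordAA + v wordEmpty) := by
  intro n
  induction n using Nat.strong_induction_on with
  | _ n ih =>
    match n, ih with
    | 0, _ =>
      rw [show Wn 0 = wordEmpty from Subtype.ext rfl]
      norm_num
    | 1, _ =>
      rw [show Wn 1 = wordAA from Subtype.ext rfl]
      norm_num
    | 2, _ =>
      rw [show Wn 2 = wordAABB from Subtype.ext rfl]
      norm_num
      ring
    | (k+3), ih =>
      rw [rec3 v hv k, ih (k+2) (by omega), ih (k+1) (by omega), ih k (by omega)]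
      simp only [castC]
      push_cast
      ring

end MainAux

/-- a finite type invariant of degree ≤ 2 satisfies
`v(wₙ) = v(φ) + n·(v(AA) − v(φ)) + (n(n−1)/2)·(v(AABB) − 2v(AA) + v(φ))`
on the word `wₙ = A₁A₁A₂A₂…AₙAₙ`. -/
theorem finiteTypeLe_two_on_chain (F : Type*) [Field F] [CharZero F]
    (v : SignedWord → F) (hv : FiniteTypeLe F 2 v) (n : ℕ)
    (w : SignedWord) (hw : w.1 = wListN n) :
    v w = v wordEmpty + (n : F) * (v wordAA - v wordEmpty) +
      ((n * (n - 1) / 2 : ℕ) : F) * (v wordAABB - 2 * v wordAA + v wordEmpty) := by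
  rw [show w = Wn n from Subtype.ext hw]
  exact key_formula v hv n
end
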